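/- Let α > 0, let r and d1, d2 be positive integers, and let γ ∈ (0,1] be such that r/γ² is an integer with r/γ² ≤ d1. Define H = {M ∈ ℝ^{d1×d2} : ‖M‖_* ≤ α√(r d1 d2), ‖M‖_∞ ≤ α}. Then there exists a finite set χ ⊆ H of cardinality |χ| ≥ exp(r d2 / (16 γ²)) such that: (1) every entry of every X ∈ χ satisfies |X_ij| = αγ; and (2) for all distinct X, X' ∈ χ, ‖X − X'‖_F² > α² γ² d1 d2 / 2. -/

import Mathlib

open Real Finset

/-- The nuclear norm of a real matrix: the sum of its singular values, i.e. the sum of the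
square roots of the eigenvalues of `Mᵀ M`. -/
noncomputable def nuclearNorm {d1 d2 : ℕ} (M : Matrix (Fin d1) (Fin d2) ℝ) : ℝ :=
  ∑ i, Real.sqrt ((Matrix.isHermitian_conjTranspose_mul_self M).eigenvalues i)

/-- Squared Frobenius norm. -/
def frobSq {d1 d2 : ℕ} (M : Matrix (Fin d1) (Fin d2) ℝ) : ℝ := ∑ i, ∑ j, (M i j) ^ 2

/-- Hamming ball cardinality bound. -/
lemma ball_card_le {ι : Type*} [Fintype ι] [DecidableEq ι] (x : ι → Bool) (m : ℕ) :
    ((univ : Finset (ι → Bool)).filter (fun y => hammingDist x y ≤ m)).card ≤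
      ∑ k ∈ Finset.range (m+1), (Fintype.card ι).choose k := by
  classical
  have hcard : ((Finset.range (m+1)).biUnion
      (fun k => (univ : Finset ι).powersetCard k)).card ≤
      ∑ k ∈ Finset.range (m+1), (Fintype.card ι).choose k := by
    refine (Finset.card_biUnion_le).trans ?_
    refine Finset.sum_le_sum fun k _ => ?_
    simp [Finset.card_powersetCard]
  refine le_trans ?_ hcard
  apply Finset.card_le_card_of_injOn (fun y => (univ : Finset ι).filter (fun i => x i ≠ y i))
  · intro y hy
    simp only [Finset.mem_coe, Finset.mem_filter, Finset.mem_univ, true_and] at hy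
    simp only [Finset.mem_coe, Finset.mem_biUnion, Finset.mem_range, Finset.mem_powersetCard]
    exact ⟨_, Nat.lt_succ_of_le hy, Finset.subset_univ _, rfl⟩
  · intro y _ y' _ h
    funext i
    have := Finset.ext_iff.mp h i
    simp only [Finset.mem_filter, Finset.mem_univ, true_and] at this
    cases hxy : x i <;> cases hy : y i <;> cases hy' : y' i <;> simp_all

/-- Greedy packing: a maximal `> m`-separated set covers, giving a counting bound. -/
lemma exists_packing (ι : Type*) [Fintype ι] [DecidableEq ι] (m : ℕ) :
    ∃ S : Finset (ι → Bool), (∀ x ∈ S, ∀ y ∈ S, x ≠ y → m < hammingDist x y) ∧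
      2 ^ (Fintype.card ι) ≤ S.card * ∑ k ∈ Finset.range (m+1), (Fintype.card ι).choose k := by
  classical
  set F := (univ : Finset (Finset (ι → Bool))).filter
      (fun S => ∀ x ∈ S, ∀ y ∈ S, x ≠ y → m < hammingDist x y) with hF
  have hne : F.Nonempty := ⟨∅, by simp [hF]⟩
  obtain ⟨S, hSF, hmax⟩ := F.exists_max_image Finset.card hne
  simp only [hF, Finset.mem_filter, Finset.mem_univ, true_and] at hSF
  refine ⟨S, hSF, ?_⟩
  have hcover : ∀ y : ι → Bool, ∃ x ∈ S, hammingDist x y ≤ m := by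
    intro y
    by_contra hc
    push_neg at hc
    have hyS : y ∉ S := fun hy => by
      have := hc y hy; simp [hammingDist_self] at this
    have hins : insert y S ∈ F := by
      simp only [hF, Finset.mem_filter, Finset.mem_univ, true_and]
      intro a ha b hb hab
      by_cases hay : a = y
      · by_cases hby : b = y
        · exact absurd (hay.trans hby.symm) hab
        · subst hay
          rw [hammingDist_comm]
          exact hc b (Finset.mem_of_mem_insert_of_ne hb hby)
      · by_cases hby : b = y
        · subst hby
          exact hc a (Finset.mem_of_mem_insert_of_ne ha hay)
        · exact hSF a (Finset.mem_of_mem_insert_of_ne ha hay) b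
            (Finset.mem_of_mem_insert_of_ne hb hby) hab
    have := hmax _ hins
    rw [Finset.card_insert_of_notMem hyS] at this
    omega
  have hsub : (univ : Finset (ι → Bool)) ⊆
      S.biUnion (fun x => (univ : Finset (ι → Bool)).filter (fun y => hammingDist x y ≤ m)) := by
    intro y _
    obtain ⟨x, hx, hxy⟩ := hcover y
    exact Finset.mem_biUnion.mpr ⟨x, hx, by simp [hxy]⟩
  calc 2 ^ (Fintype.card ι) = (univ : Finset (ι → Bool)).card := by
        simp [Fintype.card_fun]
    _ ≤ _ := Finset.card_le_card hsub
    _ ≤ ∑ x ∈ S, ((univ : Finset (ι → Bool)).filter (fun y => hammingDist x y ≤ m)).card :=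
        Finset.card_biUnion_le
    _ ≤ ∑ _x ∈ S, ∑ k ∈ Finset.range (m+1), (Fintype.card ι).choose k :=
        Finset.sum_le_sum fun x _ => ball_card_le x m
    _ = S.card * ∑ k ∈ Finset.range (m+1), (Fintype.card ι).choose k := by
        rw [Finset.sum_const, smul_eq_mul]

/-- Binomial tail bound. -/
lemma binom_bound (N m : ℕ) (h : m ≤ N) :
    (∑ k ∈ Finset.range (m+1), N.choose k) * 3 ^ (N - m) ≤ 4 ^ N := by
  rw [Finset.sum_mul]
  calc ∑ k ∈ Finset.range (m+1), N.choose k * 3 ^ (N - m)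
      ≤ ∑ k ∈ Finset.range (m+1), 1 ^ k * 3 ^ (N - k) * N.choose k := by
        refine Finset.sum_le_sum fun k hk => ?_
        have hk' : k ≤ m := Nat.lt_succ_iff.mp (Finset.mem_range.mp hk)
        have : 3 ^ (N - m) ≤ 3 ^ (N - k) := Nat.pow_le_pow_right (by norm_num) (by omega)
        calc N.choose k * 3 ^ (N - m) ≤ N.choose k * 3 ^ (N - k) :=
              Nat.mul_le_mul_left _ this
          _ = 1 ^ k * 3 ^ (N - k) * N.choose k := by ring
    _ ≤ ∑ k ∈ Finset.range (N+1), 1 ^ k * 3 ^ (N - k) * N.choose k := by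
        refine Finset.sum_le_sum_of_subset ?_
        exact Finset.range_subset_range.mpr (by omega)
    _ = (1 + 3) ^ N := (add_pow 1 3 N).symm
    _ = 4 ^ N := by norm_num

lemma exp_quarter_le : Real.exp (1/4) ≤ 4/3 := by
  have h := Real.add_one_le_exp (-(1/4 : ℝ))
  have hpos : (0:ℝ) < Real.exp (1/4) := Real.exp_pos _
  rw [Real.exp_neg] at h
  have h34 : (3/4 : ℝ) ≤ (Real.exp (1/4))⁻¹ := by linarith
  rw [le_inv_comm₀ (by norm_num) hpos] at h34
  linarith [h34]

lemma exp_count_bound (N m M : ℕ) (h4 : 4 * m ≤ N)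
    (hcount : 2 ^ N * 3 ^ (N - m) ≤ M * 4 ^ N) :
    Real.exp ((N : ℝ) / 16) ≤ M := by
  have hkey : Real.exp ((N : ℝ) / 16) * 4 ^ N ≤ (2 : ℝ) ^ N * 3 ^ (N - m) := by
    have hL : (0:ℝ) ≤ Real.exp ((N : ℝ) / 16) * 4 ^ N :=
      mul_nonneg (Real.exp_pos _).le (by positivity)
    have hR : (0:ℝ) ≤ (2 : ℝ) ^ N * 3 ^ (N - m) := by positivity
    have hpow : (Real.exp ((N : ℝ) / 16) * 4 ^ N) ^ 4 ≤ ((2 : ℝ) ^ N * 3 ^ (N - m)) ^ 4 := by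
      have e1 : (Real.exp ((N : ℝ) / 16) * 4 ^ N) ^ 4
          = Real.exp ((N : ℝ) / 4) * (4 : ℝ) ^ (4 * N) := by
        rw [mul_pow, ← Real.exp_nat_mul, ← pow_mul]
        ring_nf
      have e2 : ((2 : ℝ) ^ N * 3 ^ (N - m)) ^ 4 = (2 : ℝ) ^ (4 * N) * 3 ^ (4 * (N - m)) := by
        rw [mul_pow, ← pow_mul, ← pow_mul]
        ring_nf
      rw [e1, e2]
      have h3 : (3 : ℝ) ^ (3 * N) ≤ (3 : ℝ) ^ (4 * (N - m)) :=
        pow_le_pow_right₀ (by norm_num) (by omega)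
      have hexp : Real.exp ((N : ℝ) / 4) ≤ (4/3 : ℝ) ^ N := by
        have : Real.exp ((N : ℝ) / 4) = Real.exp (1/4) ^ N := by
          rw [← Real.exp_nat_mul]; ring_nf
        rw [this]
        exact pow_le_pow_left₀ (Real.exp_pos _).le exp_quarter_le N
      calc Real.exp ((N : ℝ) / 4) * (4 : ℝ) ^ (4 * N)
          ≤ (4/3 : ℝ) ^ N * (4 : ℝ) ^ (4 * N) := by
            apply mul_le_mul_of_nonneg_right hexp (by positivity)
        _ = (1024/3 : ℝ) ^ N := by
            rw [pow_mul]
            rw [← mul_pow]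
            norm_num
        _ ≤ (432 : ℝ) ^ N := pow_le_pow_left₀ (by norm_num) (by norm_num) N
        _ = (2 : ℝ) ^ (4 * N) * 3 ^ (3 * N) := by
            rw [pow_mul, pow_mul, ← mul_pow]
            norm_num
        _ ≤ (2 : ℝ) ^ (4 * N) * 3 ^ (4 * (N - m)) := by
            apply mul_le_mul_of_nonneg_left h3 (by positivity)
    exact le_of_pow_le_pow_left₀ (by norm_num) hR hpow
  have hC : (2 : ℝ) ^ N * 3 ^ (N - m) ≤ (M : ℝ) * 4 ^ N := by
    exact_mod_cast Nat.cast_le.mpr hcount |>.trans_eq (by push_cast; ring)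
  have h4pos : (0:ℝ) < 4 ^ N := by positivity
  have := hkey.trans hC
  exact le_of_mul_le_mul_right this h4pos
lemma trace_transpose_mul_self_eq_frobSq {d1 d2 : ℕ} (X : Matrix (Fin d1) (Fin d2) ℝ) :
    (X.conjTranspose * X).trace = frobSq X := by
  rw [Matrix.trace, frobSq, Finset.sum_comm]
  simp [Matrix.diag, Matrix.mul_apply, Matrix.conjTranspose_apply, pow_two]

lemma sum_eigenvalues_eq_trace {d : ℕ} {A : Matrix (Fin d) (Fin d) ℝ} (hA : A.IsHermitian) :
    ∑ i, hA.eigenvalues i = A.trace := by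
  have hst := hA.spectral_theorem
  have hU : (hA.eigenvectorUnitary : Matrix (Fin d) (Fin d) ℝ) *
      (star (hA.eigenvectorUnitary : Matrix (Fin d) (Fin d) ℝ)) = 1 :=
    Matrix.mem_unitaryGroup_iff.mp hA.eigenvectorUnitary.2
  calc ∑ i, hA.eigenvalues i
      = (Matrix.diagonal (RCLike.ofReal ∘ hA.eigenvalues) : Matrix (Fin d) (Fin d) ℝ).trace := by
        rw [Matrix.trace_diagonal]; simp
    _ = A.trace := by
        conv_rhs => rw [hst]
        rw [Unitary.conjStarAlgAut_apply, Matrix.trace_mul_comm, ← Matrix.mul_assoc, Unitary.coe_star_mul_self,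
          Matrix.one_mul]

lemma nuclearNorm_le_sqrt_rank_mul_frobSq {d1 d2 : ℕ} (X : Matrix (Fin d1) (Fin d2) ℝ) :
    nuclearNorm X ≤ Real.sqrt ((X.rank : ℝ) * frobSq X) := by
  classical
  set hH := Matrix.isHermitian_conjTranspose_mul_self X with hHdef
  have hpsd : (X.conjTranspose * X).PosSemidef :=
    Matrix.posSemidef_conjTranspose_mul_self X
  have hnn : ∀ i, 0 ≤ hH.eigenvalues i := fun i => hpsd.eigenvalues_nonneg i
  have htr : ∑ i, hH.eigenvalues i = frobSq X := by
    rw [sum_eigenvalues_eq_trace hH, trace_transpose_mul_self_eq_frobSq]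
  set s : Finset (Fin d2) := Finset.univ.filter (fun i => hH.eigenvalues i ≠ 0) with hs
  have hcard : s.card = X.rank := by
    rw [← Matrix.rank_conjTranspose_mul_self X, hH.rank_eq_card_non_zero_eigs]
    rw [Fintype.card_subtype]
  have hsum : nuclearNorm X = ∑ i ∈ s, Real.sqrt (hH.eigenvalues i) := by
    rw [nuclearNorm]
    refine (Finset.sum_subset (Finset.subset_univ s) ?_).symm
    intro i _ hi
    simp only [hs, Finset.mem_filter, Finset.mem_univ, true_and, not_not] at hi
    rw [hi, Real.sqrt_zero]
  rw [hsum]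
  have hCS : (∑ i ∈ s, Real.sqrt (hH.eigenvalues i)) ^ 2 ≤
      (s.card : ℝ) * ∑ i ∈ s, hH.eigenvalues i := by
    have := sq_sum_le_card_mul_sum_sq (s := s)
      (f := fun i => Real.sqrt (hH.eigenvalues i))
    refine this.trans_eq ?_
    congr 1
    exact Finset.sum_congr rfl fun i _ => Real.sq_sqrt (hnn i)
  have hsle : ∑ i ∈ s, hH.eigenvalues i ≤ frobSq X := by
    rw [← htr]
    exact Finset.sum_le_sum_of_subset_of_nonneg (Finset.subset_univ s)
      (fun i _ _ => hnn i)
  have hfrob : 0 ≤ frobSq X :=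
    Finset.sum_nonneg fun i _ => Finset.sum_nonneg fun j _ => sq_nonneg _
  rw [Real.le_sqrt (Finset.sum_nonneg fun i _ => Real.sqrt_nonneg _)
    (by positivity)]
  calc (∑ i ∈ s, Real.sqrt (hH.eigenvalues i)) ^ 2
      ≤ (s.card : ℝ) * ∑ i ∈ s, hH.eigenvalues i := hCS
    _ ≤ (X.rank : ℝ) * frobSq X := by
        rw [hcard]
        apply mul_le_mul_of_nonneg_left hsle (by positivity)

lemma rank_comp_le {d1 n d2 : ℕ} (Y : Matrix (Fin n) (Fin d2) ℝ) (f : Fin d1 → Fin n) :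
    (Matrix.of fun i j => Y (f i) j).rank ≤ n := by
  have h : (Matrix.of fun i j => Y (f i) j) =
      (Matrix.of fun i k => if f i = k then (1:ℝ) else 0) * Y := by
    ext i j
    simp [Matrix.mul_apply]
  rw [h]
  refine (Matrix.rank_mul_le_right _ _).trans ?_
  simpa using Y.rank_le_card_height

lemma fiber_sum_le {n d1 : ℕ} (hn : 0 < n) (g : Fin n → ℝ) (hg : ∀ k, 0 ≤ g k) :
    ((d1 / n : ℕ) : ℝ) * ∑ k, g k ≤ ∑ i : Fin d1, g ⟨i.val % n, Nat.mod_lt _ hn⟩ := by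
  classical
  set q := d1 / n with hq
  have hqn : q * n ≤ d1 := by
    rw [hq]; exact Nat.div_mul_le_self d1 n
  set e : Fin n × Fin q → Fin d1 := fun p =>
    ⟨p.1.val + p.2.val * n, by
      have h1 : p.1.val + p.2.val * n < (p.2.val + 1) * n := by
        rw [add_mul, one_mul, Nat.add_comm (p.2.val * n) n]
        exact Nat.add_lt_add_right p.1.isLt _
      have h2 : (p.2.val + 1) * n ≤ q * n := Nat.mul_le_mul_right _ p.2.isLt
      exact lt_of_lt_of_le h1 (le_trans h2 hqn)⟩ with he
  have hinj : Function.Injective e := by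
    intro p p' hpp
    have hval : p.1.val + p.2.val * n = p'.1.val + p'.2.val * n := by
      simpa [he] using congrArg Fin.val hpp
    have h1 : p.1.val = p'.1.val := by
      have := congrArg (· % n) hval
      simpa [Nat.add_mul_mod_self_right, Nat.mod_eq_of_lt p.1.isLt,
        Nat.mod_eq_of_lt p'.1.isLt] using this
    have h2 : p.2.val = p'.2.val := by
      have : p.2.val * n = p'.2.val * n := by omega
      exact Nat.eq_of_mul_eq_mul_right hn this
    exact Prod.ext (Fin.ext h1) (Fin.ext h2)
  have hsub := Finset.sum_le_sum_of_subset_of_nonneg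
    (Finset.subset_univ ((Finset.univ : Finset (Fin n × Fin q)).image e))
    (f := fun i : Fin d1 => g ⟨i.val % n, Nat.mod_lt _ hn⟩)
    (fun i _ _ => hg _)
  have himg : ∑ i ∈ (Finset.univ : Finset (Fin n × Fin q)).image e,
      g ⟨i.val % n, Nat.mod_lt _ hn⟩ = (q : ℝ) * ∑ k, g k := by
    rw [Finset.sum_image (fun p _ p' _ h => hinj h)]
    have : ∀ p : Fin n × Fin q,
        g ⟨(e p).val % n, Nat.mod_lt _ hn⟩ = g p.1 := by
      intro p
      congr 1
      apply Fin.ext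
      simp [he, Nat.add_mul_mod_self_right, Nat.mod_eq_of_lt p.1.isLt]
    rw [Finset.sum_congr rfl fun p _ => this p]
    rw [Fintype.sum_prod_type]
    simp only [Finset.sum_const, Finset.card_univ, Fintype.card_fin, nsmul_eq_mul]
    rw [Finset.mul_sum]
  rw [← himg]
  exact hsub

/-- Packing set construction (Lemma 4): there is a set `χ` inside
`H = {M : ‖M‖_* ≤ α√(r d1 d2), ‖M‖_∞ ≤ α}` of cardinality at least `exp(r d2/(16γ²))`,
all of whose entries have absolute value `αγ`, and whose distinct elements are
`‖X − X'‖_F² > α²γ² d1 d2 / 2` apart. -/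
theorem packing_set_exists (d1 d2 r : ℕ) (α γ : ℝ)
    (hα : 0 < α) (hr : 0 < r) (hd1 : 0 < d1) (hd2 : 0 < d2)
    (hγ0 : 0 < γ) (hγ1 : γ ≤ 1)
    (hint : ∃ n : ℕ, (n : ℝ) = (r : ℝ) / γ ^ 2)
    (hle : (r : ℝ) / γ ^ 2 ≤ d1) :
    ∃ χ : Finset (Matrix (Fin d1) (Fin d2) ℝ),
      (∀ X ∈ χ, nuclearNorm X ≤ α * Real.sqrt ((r : ℝ) * d1 * d2) ∧ (∀ i j, |X i j| ≤ α)) ∧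
      Real.exp ((r : ℝ) * d2 / (16 * γ ^ 2)) ≤ χ.card ∧
      (∀ X ∈ χ, ∀ i j, |X i j| = α * γ) ∧
      (∀ X ∈ χ, ∀ X' ∈ χ, X ≠ X' → α ^ 2 * γ ^ 2 * d1 * d2 / 2 < frobSq (X - X')) := by
  classical
  obtain ⟨n, hn⟩ := hint
  have hγ2 : (0:ℝ) < γ ^ 2 := by positivity
  have hrn : (n : ℝ) * γ ^ 2 = r := by
    rw [hn]; field_simp
  have hn0 : 0 < n := by
    have h0 : (0:ℝ) < (n:ℝ) := by
      rw [hn]; positivity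
    exact_mod_cast h0
  have hnd1 : n ≤ d1 := by
    have h1 : (n:ℝ) ≤ d1 := by rw [hn]; exact hle
    exact_mod_cast h1
  set N := n * d2 with hN
  have hcardι : Fintype.card (Fin n × Fin d2) = N := by simp [hN]
  set m := N / 4 with hm
  obtain ⟨S, hSdist, hScount⟩ := exists_packing (Fin n × Fin d2) m
  rw [hcardι] at hScount
  have hαγ : (0:ℝ) < α * γ := mul_pos hα hγ0
  set sgn : Bool → ℝ := fun b => if b then 1 else -1 with hsgn
  have hsgn1 : ∀ b, |sgn b| = 1 := by intro b; cases b <;> simp [hsgn]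
  have hsgnsq : ∀ b, sgn b ^ 2 = 1 := by intro b; cases b <;> simp [hsgn]
  set Φ : ((Fin n × Fin d2) → Bool) → Matrix (Fin d1) (Fin d2) ℝ := fun c =>
    Matrix.of fun i j => α * γ * sgn (c (⟨i.val % n, Nat.mod_lt _ hn0⟩, j)) with hΦ
  have hΦinj : Function.Injective Φ := by
    intro c c' h
    funext p
    obtain ⟨k, j⟩ := p
    have hk : (k : ℕ) < d1 := lt_of_lt_of_le k.isLt hnd1
    have h2 := congrFun (congrFun h ⟨k, hk⟩) j
    simp only [hΦ, Matrix.of_apply] at h2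
    have hmod : (⟨(k:ℕ) % n, Nat.mod_lt _ hn0⟩ : Fin n) = k :=
      Fin.ext (Nat.mod_eq_of_lt k.isLt)
    rw [hmod] at h2
    have h3 := mul_left_cancel₀ (ne_of_gt hαγ) h2
    cases hc : c (k, j) <;> cases hc' : c' (k, j) <;> rw [hc, hc'] at h3 <;>
      simp only [hsgn] at h3 <;> first | rfl | norm_num at h3
  -- entry absolute values
  have habs : ∀ c i j, |Φ c i j| = α * γ := by
    intro c i j
    simp only [hΦ, Matrix.of_apply]
    rw [abs_mul, hsgn1, mul_one, abs_of_pos hαγ]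
  -- frobenius norm
  have hfrob : ∀ c, frobSq (Φ c) = α ^ 2 * γ ^ 2 * d1 * d2 := by
    intro c
    have : ∀ i j, (Φ c i j) ^ 2 = α ^ 2 * γ ^ 2 := by
      intro i j
      simp only [hΦ, Matrix.of_apply]
      rw [mul_pow, mul_pow, hsgnsq, mul_one]
    simp only [frobSq, this, Finset.sum_const, Finset.card_univ, Fintype.card_fin,
      nsmul_eq_mul]
    ring
  -- rank
  have hrank : ∀ c, (Φ c).rank ≤ n := by
    intro c
    have : Φ c = Matrix.of fun i j =>
        (Matrix.of fun (k : Fin n) (j : Fin d2) => α * γ * sgn (c (k, j))) 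
          (⟨i.val % n, Nat.mod_lt _ hn0⟩ : Fin n) j := rfl
    rw [this]
    exact rank_comp_le _ _
  -- nuclear norm
  have hnuc : ∀ c, nuclearNorm (Φ c) ≤ α * Real.sqrt ((r : ℝ) * d1 * d2) := by
    intro c
    refine (nuclearNorm_le_sqrt_rank_mul_frobSq (Φ c)).trans ?_
    have h1 : ((Φ c).rank : ℝ) * frobSq (Φ c) ≤ α ^ 2 * ((r:ℝ) * d1 * d2) := by
      rw [hfrob]
      have h2 : ((Φ c).rank : ℝ) ≤ n := by exact_mod_cast hrank c
      have h3 : (0:ℝ) ≤ α ^ 2 * γ ^ 2 * d1 * d2 := by positivity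
      refine (mul_le_mul_of_nonneg_right h2 h3).trans_eq ?_
      rw [← hrn]; ring
    refine (Real.sqrt_le_sqrt h1).trans_eq ?_
    rw [Real.sqrt_mul (sq_nonneg α), Real.sqrt_sq hα.le]
  refine ⟨S.image Φ, ?_, ?_, ?_, ?_⟩
  · rintro X hX
    obtain ⟨c, _, rfl⟩ := Finset.mem_image.mp hX
    refine ⟨hnuc c, fun i j => ?_⟩
    rw [habs]
    calc α * γ ≤ α * 1 := by nlinarith
      _ = α := mul_one α
  · -- cardinality
    rw [Finset.card_image_of_injective _ hΦinj]
    have hexp_eq : (r : ℝ) * d2 / (16 * γ ^ 2) = (N : ℝ) / 16 := by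
      rw [← hrn, hN]
      push_cast
      field_simp
    rw [hexp_eq]
    refine exp_count_bound N m S.card ?_ ?_
    · omega
    · have hmN : m ≤ N := by omega
      have hb := binom_bound N m hmN
      calc 2 ^ N * 3 ^ (N - m)
          ≤ (S.card * ∑ k ∈ Finset.range (m+1), N.choose k) * 3 ^ (N - m) :=
            Nat.mul_le_mul_right _ hScount
        _ = S.card * ((∑ k ∈ Finset.range (m+1), N.choose k) * 3 ^ (N - m)) := by ring
        _ ≤ S.card * 4 ^ N := Nat.mul_le_mul_left _ hb
  · rintro X hX i j
    obtain ⟨c, _, rfl⟩ := Finset.mem_image.mp hX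
    exact habs c i j
  · rintro X hX X' hX' hne
    obtain ⟨c, hcS, rfl⟩ := Finset.mem_image.mp hX
    obtain ⟨c', hcS', rfl⟩ := Finset.mem_image.mp hX'
    have hcc : c ≠ c' := fun h => hne (by rw [h])
    have hD : m < hammingDist c c' := hSdist c hcS c' hcS' hcc
    set D := hammingDist c c' with hDdef
    -- column sums
    set G : Fin n → ℝ := fun k =>
      ∑ j, (α * γ * sgn (c (k, j)) - α * γ * sgn (c' (k, j))) ^ 2 with hG
    have hGnn : ∀ k, 0 ≤ G k :=
      fun k => Finset.sum_nonneg fun j _ => sq_nonneg _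
    have hfs : frobSq (Φ c - Φ c') = ∑ i : Fin d1, G ⟨i.val % n, Nat.mod_lt _ hn0⟩ := by
      simp only [frobSq, hG, Matrix.sub_apply, hΦ, Matrix.of_apply]
    have hGsum : ∑ k, G k = 4 * (α ^ 2 * γ ^ 2) * D := by
      have hterm : ∀ p : Fin n × Fin d2,
          (α * γ * sgn (c p) - α * γ * sgn (c' p)) ^ 2 =
            if c p ≠ c' p then 4 * (α ^ 2 * γ ^ 2) else 0 := by
        intro p
        cases hc : c p <;> cases hc' : c' p <;> simp [hsgn, hc, hc'] <;> ring
      calc ∑ k, G k = ∑ p : Fin n × Fin d2,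
            (α * γ * sgn (c p) - α * γ * sgn (c' p)) ^ 2 := by
            rw [Fintype.sum_prod_type]
        _ = ∑ p : Fin n × Fin d2, if c p ≠ c' p then 4 * (α ^ 2 * γ ^ 2) else 0 :=
            Finset.sum_congr rfl fun p _ => hterm p
        _ = 4 * (α ^ 2 * γ ^ 2) * D := by
            rw [Finset.sum_ite, Finset.sum_const, Finset.sum_const]
            simp only [nsmul_eq_mul, smul_zero, add_zero, hDdef, hammingDist]
            ring
    set q := d1 / n with hq
    have hfiber := fiber_sum_le hn0 G hGnn (d1 := d1)
    rw [← hfs] at hfiber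
    -- arithmetic
    have hq1 : 1 ≤ q := (Nat.one_le_div_iff hn0).mpr hnd1
    have hd1q : (d1 : ℝ) < 2 * n * q := by
      have h1 : d1 < n * q + n := by
        have h := Nat.div_add_mod d1 n
        rw [← hq] at h
        calc d1 = n * q + d1 % n := h.symm
          _ < n * q + n := Nat.add_lt_add_left (Nat.mod_lt d1 hn0) _
      have h2 : n * q + n ≤ 2 * (n * q) := by nlinarith
      have h3 : (d1 : ℕ) < 2 * (n * q) := lt_of_lt_of_le h1 h2
      have h4 : (d1 : ℝ) < ((2 * (n * q) : ℕ) : ℝ) := by exact_mod_cast h3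
      calc (d1:ℝ) < ((2 * (n * q) : ℕ) : ℝ) := h4
        _ = 2 * n * q := by push_cast; ring
    have hND : (N : ℝ) < 4 * D := by
      have h1 : N < 4 * m + 4 := by omega
      have h2 : m + 1 ≤ D := hD
      have : N < 4 * D := by omega
      exact_mod_cast this
    have hqD : (d1 : ℝ) * d2 < 8 * q * D := by
      have hNr : (N : ℝ) = (n : ℝ) * d2 := by rw [hN]; push_cast; ring
      have hd2pos : (0:ℝ) < d2 := by exact_mod_cast hd2
      have hnpos : (0:ℝ) < n := by exact_mod_cast hn0
      have hqpos : (0:ℝ) < q := by exact_mod_cast hq1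
      have s1 : (d1:ℝ) * d2 < (2*n*q) * d2 := mul_lt_mul_of_pos_right hd1q hd2pos
      have s3 : (2:ℝ)*q*((n:ℝ)*d2) < 2*q*(4*D) := by
        refine mul_lt_mul_of_pos_left ?_ (by linarith)
        rw [← hNr]; exact hND
      calc (d1:ℝ) * d2 < (2*n*q) * d2 := s1
        _ = 2*q*((n:ℝ)*d2) := by ring
        _ < 2*q*(4*D) := s3
        _ = 8*q*D := by ring
    have hkey : α ^ 2 * γ ^ 2 * d1 * d2 / 2 < (q : ℝ) * (4 * (α ^ 2 * γ ^ 2) * D) := by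
      have hpos : (0:ℝ) < α ^ 2 * γ ^ 2 / 2 := by positivity
      have h5 := mul_lt_mul_of_pos_left hqD hpos
      calc α ^ 2 * γ ^ 2 * d1 * d2 / 2 = α ^ 2 * γ ^ 2 / 2 * ((d1:ℝ) * d2) := by ring
        _ < α ^ 2 * γ ^ 2 / 2 * (8 * q * D) := h5
        _ = (q : ℝ) * (4 * (α ^ 2 * γ ^ 2) * D) := by ring
    rw [hGsum] at hfiber
    linarith
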